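/- The function φ(r) = r² e^(−r) sinh(r) on (0,∞) satisfies: φ'(r)·φ''(r) > 0 for all r > 0, there exist constants 0 < k₁ ≤ k₂ with k₁ ≤ r·φ''(r)/φ'(r) ≤ k₂ for all r > 0, and there exists k₃ > 0 with |r·φ'''(r)/φ''(r)| ≤ k₃ for all r > 0. -/

import Mathlib

open Real

lemma cubic_le_exp {x : ℝ} (hx : 0 ≤ x) : 1 + x + x^2/2 + x^3/6 ≤ Real.exp x := by
  have h := Real.sum_le_exp_of_nonneg hx 4
  simp [Finset.sum_range_succ, Nat.factorial] at h
  linarith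

lemma hE (r : ℝ) : HasDerivAt (fun x : ℝ => Real.exp (-(2*x))) (-2 * Real.exp (-(2*r))) r := by
  have h : HasDerivAt (fun x : ℝ => -(2*x)) (-2 : ℝ) r := by
    simpa using ((hasDerivAt_id r).const_mul (2:ℝ)).fun_neg
  simpa [mul_comm] using h.exp

lemma d0 (r : ℝ) : HasDerivAt (fun x : ℝ => (x^2 - x^2 * Real.exp (-(2*x)))/2)
    (r + (r^2 - r) * Real.exp (-(2*r))) r := by
  have h1 : HasDerivAt (fun x : ℝ => x^2) (2*r) r := by simpa using hasDerivAt_pow 2 r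
  have h2 := h1.fun_mul (hE r)
  have h3 := (h1.fun_sub h2).div_const 2
  exact h3.congr_deriv (by ring)

lemma d1 (r : ℝ) : HasDerivAt (fun x : ℝ => x + (x^2 - x) * Real.exp (-(2*x)))
    (1 + (-2*r^2+4*r-1) * Real.exp (-(2*r))) r := by
  have h1 : HasDerivAt (fun x : ℝ => x^2 - x) (2*r - 1) r := by
    simpa using (hasDerivAt_pow 2 r).fun_sub (hasDerivAt_id' r)
  have h2 := (hasDerivAt_id' r).fun_add (h1.fun_mul (hE r))
  exact h2.congr_deriv (by ring)

lemma d2 (r : ℝ) : HasDerivAt (fun x : ℝ => 1 + (-2*x^2+4*x-1) * Real.exp (-(2*x)))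
    ((4*r^2-12*r+6) * Real.exp (-(2*r))) r := by
  have h1 : HasDerivAt (fun x : ℝ => -2*x^2+4*x-1) (-4*r + 4) r := by
    have := (((hasDerivAt_pow 2 r).const_mul (-2:ℝ)).fun_add ((hasDerivAt_id' r).const_mul (4:ℝ))).sub_const (1:ℝ)
    exact this.congr_deriv (by ring)
  have h2 := (hasDerivAt_const r (1:ℝ)).fun_add (h1.fun_mul (hE r))
  exact h2.congr_deriv (by ring)

theorem stmt_2 :
    let φ : ℝ → ℝ := fun r => r ^ 2 * Real.exp (-r) * Real.sinh r
    (∀ r > (0:ℝ), deriv φ r * deriv (deriv φ) r > 0) ∧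
    (∃ k₁ k₂ : ℝ, 0 < k₁ ∧ k₁ ≤ k₂ ∧ ∀ r > (0:ℝ),
      k₁ ≤ r * deriv (deriv φ) r / deriv φ r ∧
      r * deriv (deriv φ) r / deriv φ r ≤ k₂) ∧
    (∃ k₃ : ℝ, 0 < k₃ ∧ ∀ r > (0:ℝ),
      |r * deriv (deriv (deriv φ)) r / deriv (deriv φ) r| ≤ k₃) := by
  intro φ
  have hφ : φ = fun x : ℝ => (x^2 - x^2 * Real.exp (-(2*x)))/2 := by
    funext x
    show x ^ 2 * Real.exp (-x) * Real.sinh x = _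
    rw [Real.sinh_eq]
    have h1 : Real.exp (-x) * Real.exp x = 1 := by rw [← Real.exp_add]; simp
    have h2 : Real.exp (-x) * Real.exp (-x) = Real.exp (-(2*x)) := by
      rw [← Real.exp_add]; ring_nf
    field_simp
    simp only [mul_comm 2 x] at h2 ⊢
    linear_combination (x^2) * h1 - (x^2) * h2
  have e0 : deriv φ = fun r : ℝ => r + (r^2 - r) * Real.exp (-(2*r)) := by
    rw [hφ]; funext r; exact (d0 r).deriv
  have e1 : deriv (deriv φ) = fun r : ℝ => 1 + (-2*r^2+4*r-1) * Real.exp (-(2*r)) := by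
    rw [e0]; funext r; exact (d1 r).deriv
  have e2 : deriv (deriv (deriv φ)) = fun r : ℝ => (4*r^2-12*r+6) * Real.exp (-(2*r)) := by
    rw [e1]; funext r; exact (d2 r).deriv
  rw [e2, e1, e0]
  simp only
  -- common facts
  have key : ∀ r : ℝ, 0 < r →
      (0 < r + (r^2 - r) * Real.exp (-(2*r))) ∧
      (0 < 1 + (-2*r^2+4*r-1) * Real.exp (-(2*r))) ∧
      ((1+2*r+(2*r)^2/2+(2*r)^3/6) * Real.exp (-(2*r)) ≤ 1) ∧
      (0 < Real.exp (-(2*r))) ∧ (Real.exp (-(2*r)) < 1) := by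
    intro r hr
    set E := Real.exp (-(2*r)) with hEdef
    have hE0 : 0 < E := Real.exp_pos _
    have hE1 : E < 1 := by
      rw [hEdef, Real.exp_lt_one_iff]; linarith
    have hkey : Real.exp (2*r) * E = 1 := by
      rw [hEdef, ← Real.exp_add]; simp
    have hexp : 1 + 2*r + (2*r)^2/2 + (2*r)^3/6 ≤ Real.exp (2*r) :=
      cubic_le_exp (by linarith)
    have hC : (1+2*r+(2*r)^2/2+(2*r)^3/6) * E ≤ 1 := by
      calc (1+2*r+(2*r)^2/2+(2*r)^3/6) * E ≤ Real.exp (2*r) * E :=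
            mul_le_mul_of_nonneg_right hexp hE0.le
        _ = 1 := hkey
    refine ⟨?_, ?_, hC, hE0, hE1⟩
    · nlinarith [mul_pos hr hE0, mul_pos (mul_pos hr hr) hE0]
    · nlinarith [mul_pos hr hE0, mul_pos (mul_pos hr hr) hE0,
        mul_pos (mul_pos (mul_pos hr hr) hr) hE0]
  refine ⟨?_, ⟨1/2, 3, by norm_num, by norm_num, ?_⟩, ⟨8, by norm_num, ?_⟩⟩
  · intro r hr
    obtain ⟨h1, h2, -, -, -⟩ := key r hr
    exact mul_pos h1 h2
  · intro r hr
    obtain ⟨h1, h2, hC, hE0, hE1⟩ := key r hr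
    set E := Real.exp (-(2*r)) with hEdef
    constructor
    · rw [le_div_iff₀ h1]
      nlinarith [mul_le_mul_of_nonneg_left hC hr.le, mul_pos (mul_pos hr hr) hE0,
        mul_pos (mul_pos (mul_pos hr hr) hr) hE0, mul_pos hr hE0,
        mul_pos (mul_pos (mul_pos (mul_pos hr hr) hr) hr) hE0]
    · rw [div_le_iff₀ h1]
      nlinarith [mul_le_mul_of_nonneg_left hC hr.le, mul_pos (mul_pos hr hr) hE0,
        mul_pos (mul_pos (mul_pos hr hr) hr) hE0, mul_pos hr hE0,
        mul_pos (mul_pos (mul_pos (mul_pos hr hr) hr) hr) hE0]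
  · intro r hr
    obtain ⟨h1, h2, hC, hE0, hE1⟩ := key r hr
    set E := Real.exp (-(2*r)) with hEdef
    rw [abs_div, abs_of_pos h2, div_le_iff₀ h2, abs_le]
    constructor
    · nlinarith [mul_le_mul_of_nonneg_left hC hr.le, mul_pos (mul_pos hr hr) hE0,
        mul_pos (mul_pos (mul_pos hr hr) hr) hE0, mul_pos hr hE0,
        mul_pos (mul_pos (mul_pos (mul_pos hr hr) hr) hr) hE0]
    · nlinarith [mul_le_mul_of_nonneg_left hC hr.le, mul_pos (mul_pos hr hr) hE0,
        mul_pos (mul_pos (mul_pos hr hr) hr) hE0, mul_pos hr hE0,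
        mul_pos (mul_pos (mul_pos (mul_pos hr hr) hr) hr) hE0]
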